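/- For every set S = {u_1, ..., u_n} ⊂ ℝ^p of n ≥ 3 distinct points, there exists a point u ∈ S that lies on the boundary of the convex hull of S, and a unit vector v ∈ ℝ^p (‖v‖ = 1), such that (1/n) · Σ_{i : u_i ≠ u} ⟨(u_i − u)/‖u_i − u‖, v⟩ ≥ 1/2. -/

import Mathlib

open scoped RealInnerProductSpace

lemma key_ineq {x y D : ℝ} (hx : 0 < x) (hy : 0 < y) (hxD : x ≤ D)
    (hyD : y ≤ D) (ht : D ≤ x + y) :
    2 * (x * y * D) ≤ (x + y) * (D ^ 2 - (x - y) ^ 2) := by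
  nlinarith [sq_nonneg (x + y - D), mul_nonneg (sub_nonneg.2 hxD) (sub_nonneg.2 hyD),
    sq_nonneg (x - y), mul_pos hx hy, mul_nonneg (mul_nonneg (sub_nonneg.2 hxD) (sub_nonneg.2 hyD)) (sub_nonneg.2 ht),
    mul_nonneg (sub_nonneg.2 ht) (sq_nonneg (x - y))]

lemma aux_frontier {p n : ℕ} (u : Fin n → EuclideanSpace ℝ (Fin p))
    {c w : EuclideanSpace ℝ (Fin p)} (hw : w ∈ Set.range u) (hcw : w ≠ c)
    (hmax : ∀ i, ‖u i - c‖ ≤ ‖w - c‖) :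
    w ∈ frontier (convexHull ℝ (Set.range u)) := by
  set K := convexHull ℝ (Set.range u) with hK
  have hcl : IsClosed K := ((Set.finite_range u).isCompact_convexHull ℝ).isClosed
  have hwK : w ∈ K := subset_convexHull ℝ _ hw
  have hball : K ⊆ Metric.closedBall c ‖w - c‖ := by
    apply convexHull_min _ (convex_closedBall _ _)
    rintro z ⟨i, rfl⟩
    simpa [Metric.mem_closedBall, dist_eq_norm] using hmax i
  have hR : (0:ℝ) < ‖w - c‖ := by
    rw [norm_pos_iff]; exact sub_ne_zero.2 hcw
  rw [frontier, hcl.closure_eq]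
  refine ⟨hwK, fun hint => ?_⟩
  obtain ⟨ε, hε, hsub⟩ := Metric.isOpen_iff.1 isOpen_interior w hint
  set t : ℝ := ε / (2 * ‖w - c‖) with hT
  have ht : 0 < t := by positivity
  have htR : t * ‖w - c‖ = ε / 2 := by
    rw [hT]; field_simp
  have hw' : w + t • (w - c) ∈ K := by
    apply interior_subset; apply hsub
    rw [Metric.mem_ball, dist_eq_norm]
    have : ‖w + t • (w - c) - w‖ = t * ‖w - c‖ := by
      rw [add_sub_cancel_left, norm_smul, Real.norm_eq_abs, abs_of_pos ht]
    rw [this, htR]; linarith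
  have := hball hw'
  rw [Metric.mem_closedBall, dist_eq_norm] at this
  have heq : w + t • (w - c) - c = (1 + t) • (w - c) := by
    rw [add_smul, one_smul]; abel
  rw [heq, norm_smul, Real.norm_eq_abs, abs_of_pos (by linarith)] at this
  nlinarith


/-- **Geometric Lemma.** For every set `S = {u 1, …, u n} ⊂ ℝ^p` of `n ≥ 3` distinct
points, there exists a point `u j ∈ S` lying on the boundary of the convex hull of `S`
and a unit vector `v` such that
`(1/n) · ∑_{i : u i ≠ u j} ⟨(u i − u j)/‖u i − u j‖, v⟩ ≥ 1/2`. -/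
theorem geometric_lemma {p n : ℕ} (hn : 3 ≤ n)
    (u : Fin n → EuclideanSpace ℝ (Fin p)) (hu : Function.Injective u) :
    ∃ j : Fin n, ∃ v : EuclideanSpace ℝ (Fin p),
      u j ∈ frontier (convexHull ℝ (Set.range u)) ∧ ‖v‖ = 1 ∧
      (1 : ℝ) / (n : ℝ) *
          ∑ i ∈ Finset.univ.erase j, ⟪‖u i - u j‖⁻¹ • (u i - u j), v⟫ ≥ 1 / 2 := by
  have hn0 : (0:ℕ) < n := by omega
  obtain ⟨pr, -, hpr⟩ := Finset.exists_max_image (Finset.univ : Finset (Fin n × Fin n))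
    (fun pr => ‖u pr.2 - u pr.1‖) ⟨((⟨0, by omega⟩ : Fin n), (⟨0, by omega⟩ : Fin n)), Finset.mem_univ _⟩
  set j₁ := pr.1 with hj1
  set j₂ := pr.2 with hj2
  set a := u j₁ with ha
  set b := u j₂ with hb
  set D : ℝ := ‖b - a‖ with hDdef
  have hmax : ∀ i k : Fin n, ‖u k - u i‖ ≤ D := fun i k => hpr (i, k) (Finset.mem_univ _)
  -- D > 0
  have h01 : (⟨0, by omega⟩ : Fin n) ≠ (⟨1, by omega⟩ : Fin n) := by simp
  have hD : 0 < D := by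
    have h1 : (0:ℝ) < ‖u ⟨1, by omega⟩ - u ⟨0, by omega⟩‖ := by
      rw [norm_pos_iff, sub_ne_zero]
      exact fun h => h01 (hu h).symm
    exact lt_of_lt_of_le h1 (hmax _ _)
  have hab : a ≠ b := by
    intro h
    rw [hDdef, h, sub_self, norm_zero] at hD
    exact lt_irrefl _ hD
  have hjj : j₁ ≠ j₂ := fun h => hab (by rw [ha, hb, h])
  -- frontier membership for both endpoints
  have hfr1 : a ∈ frontier (convexHull ℝ (Set.range u)) :=
    aux_frontier u (c := b) ⟨j₁, rfl⟩ hab (fun i => by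
      rw [show ‖a - b‖ = D by rw [hDdef, norm_sub_rev]]
      exact hmax j₂ i)
  have hfr2 : b ∈ frontier (convexHull ℝ (Set.range u)) :=
    aux_frontier u (c := a) ⟨j₂, rfl⟩ hab.symm (fun i => hmax j₁ i)
  -- the two candidate terms
  set va : EuclideanSpace ℝ (Fin p) := ‖b - a‖⁻¹ • (b - a) with hva
  set vb : EuclideanSpace ℝ (Fin p) := ‖a - b‖⁻¹ • (a - b) with hvb
  have hnva : ‖va‖ = 1 := norm_smul_inv_norm (sub_ne_zero.2 hab.symm)
  have hnvb : ‖vb‖ = 1 := norm_smul_inv_norm (sub_ne_zero.2 hab)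
  set ta : Fin n → ℝ := fun i => ⟪‖u i - a‖⁻¹ • (u i - a), va⟫ with hta
  set tb : Fin n → ℝ := fun i => ⟪‖u i - b‖⁻¹ • (u i - b), vb⟫ with htb
  set Sa : ℝ := ∑ i ∈ Finset.univ.erase j₁, ta i with hSa
  set Sb : ℝ := ∑ i ∈ Finset.univ.erase j₂, tb i with hSb
  -- special terms
  have htaj2 : ta j₂ = 1 := by
    rw [hta]
    simp only []
    rw [show u j₂ = b from rfl, hva]
    rw [real_inner_smul_left, real_inner_smul_right, real_inner_self_eq_norm_sq]
    rw [← hDdef]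
    field_simp
  have htbj1 : tb j₁ = 1 := by
    rw [htb]
    simp only []
    rw [show u j₁ = a from rfl, hvb]
    rw [real_inner_smul_left, real_inner_smul_right, real_inner_self_eq_norm_sq]
    rw [show ‖a - b‖ = D by rw [hDdef, norm_sub_rev]]
    field_simp
  -- pointwise bound for other indices
  have hpt : ∀ i : Fin n, i ≠ j₁ → i ≠ j₂ → 1 ≤ ta i + tb i := by
    intro i hi1 hi2
    set x : ℝ := ‖u i - a‖ with hxdef
    set y : ℝ := ‖u i - b‖ with hydef
    have hx : 0 < x := by
      rw [hxdef, norm_pos_iff, sub_ne_zero]; exact fun h => hi1 (hu h)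
    have hy : 0 < y := by
      rw [hydef, norm_pos_iff, sub_ne_zero]; exact fun h => hi2 (hu h)
    have hxD : x ≤ D := hmax j₁ i
    have hyD : y ≤ D := hmax j₂ i
    have htri : D ≤ x + y := by
      calc D = ‖b - a‖ := rfl
        _ = ‖(u i - a) - (u i - b)‖ := by rw [show (u i - a) - (u i - b) = b - a by abel]
        _ ≤ ‖u i - a‖ + ‖u i - b‖ := norm_sub_le _ _
    set P : ℝ := ⟪u i - a, b - a⟫ with hPdef
    set Q : ℝ := ⟪u i - b, a - b⟫ with hQdef
    have hP : y^2 = x^2 - 2*P + D^2 := by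
      have := norm_sub_sq_real (u i - a) (b - a)
      rw [show (u i - a) - (b - a) = u i - b by abel] at this
      rw [hydef, hxdef, this, hPdef, hDdef]
    have hQ : x^2 = y^2 - 2*Q + D^2 := by
      have := norm_sub_sq_real (u i - b) (a - b)
      rw [show (u i - b) - (a - b) = u i - a by abel] at this
      rw [hxdef, hydef, this, hQdef]
      rw [show ‖a - b‖ = D by rw [hDdef, norm_sub_rev]]
    have hkey := key_ineq hx hy hxD hyD htri
    have h2 : x * y * D ≤ y * P + x * Q := by nlinarith
    have hta_i : ta i = x⁻¹ * (D⁻¹ * P) := by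
      rw [hta]; simp only []
      rw [hva, real_inner_smul_left, real_inner_smul_right, ← hxdef, ← hPdef, ← hDdef]
    have htb_i : tb i = y⁻¹ * (D⁻¹ * Q) := by
      rw [htb]; simp only []
      rw [hvb, real_inner_smul_left, real_inner_smul_right, ← hydef, ← hQdef]
      rw [show ‖a - b‖ = D by rw [hDdef, norm_sub_rev]]
    rw [hta_i, htb_i]
    have e : x⁻¹ * (D⁻¹ * P) + y⁻¹ * (D⁻¹ * Q) = (y*P + x*Q)/(x*y*D) := by
      field_simp
    rw [e, le_div_iff₀ (by positivity), one_mul]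
    linarith
  -- sum decomposition
  have hj2mem : j₂ ∈ Finset.univ.erase j₁ := Finset.mem_erase.2 ⟨fun h => hjj h.symm, Finset.mem_univ _⟩
  have hj1mem : j₁ ∈ Finset.univ.erase j₂ := Finset.mem_erase.2 ⟨hjj, Finset.mem_univ _⟩
  have hcomm : (Finset.univ.erase j₁).erase j₂ = (Finset.univ.erase j₂).erase j₁ := by
    ext k; simp [and_left_comm, and_comm]
  have hSa_eq : Sa = ta j₂ + ∑ i ∈ (Finset.univ.erase j₁).erase j₂, ta i :=
    (Finset.add_sum_erase _ ta hj2mem).symm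
  have hSb_eq : Sb = tb j₁ + ∑ i ∈ (Finset.univ.erase j₁).erase j₂, tb i := by
    rw [hcomm]
    exact (Finset.add_sum_erase _ tb hj1mem).symm
  have hcard : ((Finset.univ.erase j₁).erase j₂).card = n - 2 := by
    rw [Finset.card_erase_of_mem hj2mem, Finset.card_erase_of_mem (Finset.mem_univ _),
      Finset.card_univ, Fintype.card_fin]
    omega
  have hsum : (n:ℝ) - 2 ≤ ∑ i ∈ (Finset.univ.erase j₁).erase j₂, (ta i + tb i) := by
    have := Finset.card_nsmul_le_sum ((Finset.univ.erase j₁).erase j₂) (fun i => ta i + tb i) 1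
      (fun i hi => by
        obtain ⟨hi2, hi1⟩ : i ≠ j₂ ∧ i ≠ j₁ := by
          simpa [Finset.mem_erase] using hi
        exact hpt i hi1 hi2)
    rw [hcard] at this
    calc (n:ℝ) - 2 = ((n - 2 : ℕ) : ℝ) := by
          rw [Nat.cast_sub (by omega)]; norm_num
      _ ≤ _ := by simpa using this
  have htotal : (n:ℝ) ≤ Sa + Sb := by
    rw [hSa_eq, hSb_eq, htaj2, htbj1]
    have hadd : ∑ i ∈ (Finset.univ.erase j₁).erase j₂, ta i
        + ∑ i ∈ (Finset.univ.erase j₁).erase j₂, tb i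
        = ∑ i ∈ (Finset.univ.erase j₁).erase j₂, (ta i + tb i) := Finset.sum_add_distrib.symm
    linarith
  -- conclude
  have hnR : (0:ℝ) < n := by exact_mod_cast hn0
  by_cases hcase : (n:ℝ)/2 ≤ Sa
  · refine ⟨j₁, va, hfr1, hnva, ?_⟩
    rw [ge_iff_le]
    rw [show (1:ℝ)/2 = (1/n) * (n/2) by field_simp]
    apply mul_le_mul_of_nonneg_left _ (by positivity)
    exact hcase
  · refine ⟨j₂, vb, hfr2, hnvb, ?_⟩
    rw [ge_iff_le]
    rw [show (1:ℝ)/2 = (1/n) * (n/2) by field_simp]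
    apply mul_le_mul_of_nonneg_left _ (by positivity)
    push_neg at hcase
    linarith
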